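/- Let A be a complete normed ring that is a normed algebra over ℂ, let H ∈ A, and let α : ℕ → ℂ be such that the series Σ_k ‖α_k‖·‖H‖ᵏ is summable. Define U = Σ'_{k=0}^{∞} α_k • Hᵏ. Let K₁ < K₂ be natural numbers, let p ∈ [0,1), and define V₂ = Σ_{k=0}^{K₁} α_k • Hᵏ + (1−p)⁻¹ • Σ_{k=K₁+1}^{K₂} α_k • Hᵏ. Set a₁ = Σ'_{k} ‖α_{K₁+1+k}‖·‖H‖^{K₁+1+k} (the tail after K₁) and b = Σ'_{k} ‖α_{K₂+1+k}‖·‖H‖^{K₂+1+k} (the tail after K₂). Then ‖U − V₂‖ ≤ b + (p/(1−p))·a₁. -/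

import Mathlib

/-- Bound `a₂ ≤ b + (p/(1−p))·a₁` from Theorem 1: the distance from the full
series `U = Σ αₖ Hᵏ` to the modified truncated series `V₂` (in which orders
`K₁+1,…,K₂` are amplified by `1/(1−p)`) is at most the order-`K₂` tail `b`
plus `p/(1−p)` times the order-`K₁` tail `a₁`. -/
theorem modified_truncation_tail_bound
    {A : Type*} [NormedRing A] [CompleteSpace A] [NormedAlgebra ℂ A]
    (H : A) (α : ℕ → ℂ)
    (hsum : Summable fun k : ℕ => ‖α k‖ * ‖H‖ ^ k)
    (K₁ K₂ : ℕ) (hK : K₁ < K₂) (p : ℝ) (hp0 : 0 ≤ p) (hp1 : p < 1)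
    (V₂ : A)
    (hV₂ : V₂ = (∑ k ∈ Finset.range (K₁ + 1), α k • H ^ k)
        + ((1 : ℂ) - (p : ℂ))⁻¹ • ∑ k ∈ Finset.Icc (K₁ + 1) K₂, α k • H ^ k)
    (a₁ b : ℝ)
    (ha₁ : a₁ = ∑' k : ℕ, ‖α (K₁ + 1 + k)‖ * ‖H‖ ^ (K₁ + 1 + k))
    (hb : b = ∑' k : ℕ, ‖α (K₂ + 1 + k)‖ * ‖H‖ ^ (K₂ + 1 + k)) :
    ‖(∑' k : ℕ, α k • H ^ k) - V₂‖ ≤ b + (p / (1 - p)) * a₁ := by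
  set f : ℕ → A := fun k => α k • H ^ k with hf
  set g : ℕ → ℝ := fun k => ‖α k‖ * ‖H‖ ^ k with hg
  have hbound : ∀ k : ℕ, 0 < k → ‖f k‖ ≤ g k := by
    intro k hk
    simp only [hf, hg, norm_smul]
    exact mul_le_mul_of_nonneg_left (norm_pow_le' H hk) (norm_nonneg _)
  have hsf : Summable f := by
    rw [← summable_nat_add_iff 1]
    refine Summable.of_norm_bounded ((summable_nat_add_iff 1).mpr hsum) ?_
    intro k; exact hbound _ (Nat.succ_pos k)
  have h1p : (0:ℝ) < 1 - p := by linarith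
  have h1pc : ((1:ℂ) - (p:ℂ)) ≠ 0 := by
    intro h
    have : (1:ℝ) - p = 0 := by exact_mod_cast congrArg Complex.re h
    linarith
  -- split the tsum
  have hsplit : (∑' k, f k) = (∑ k ∈ Finset.range (K₂ + 1), f k) + ∑' k, f (k + (K₂ + 1)) :=
    (Summable.sum_add_tsum_nat_add (K₂ + 1) hsf).symm
  have hrange : (∑ k ∈ Finset.range (K₂ + 1), f k)
      = (∑ k ∈ Finset.range (K₁ + 1), f k) + ∑ k ∈ Finset.Icc (K₁ + 1) K₂, f k := by
    rw [← Finset.Ico_add_one_right_eq_Icc, Finset.range_eq_Ico, Finset.range_eq_Ico]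
    exact (Finset.sum_Ico_consecutive f (k := K₂ + 1) (Nat.zero_le (K₁ + 1)) (by omega)).symm
  set S₂ : A := ∑ k ∈ Finset.Icc (K₁ + 1) K₂, f k with hS₂
  set T : A := ∑' k, f (k + (K₂ + 1)) with hT
  have hdiff : (∑' k, f k) - V₂ = T + ((1 : ℂ) - ((1 : ℂ) - (p:ℂ))⁻¹) • S₂ := by
    rw [hsplit, hrange, hV₂, sub_smul, one_smul]
    abel
  have hcnorm : ‖(1 : ℂ) - ((1 : ℂ) - (p:ℂ))⁻¹‖ = p / (1 - p) := by
    have : (1 : ℂ) - ((1 : ℂ) - (p:ℂ))⁻¹ = ((-(p / (1 - p)) : ℝ) : ℂ) := by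
      field_simp
      push_cast
      field_simp
      ring
    rw [this, Complex.norm_real, norm_neg, Real.norm_eq_abs,
      abs_of_nonneg (div_nonneg hp0 h1p.le)]
  -- bound on T
  have hgsum2 : Summable fun k => g (k + (K₂ + 1)) := (summable_nat_add_iff (K₂ + 1)).mpr hsum
  have hnsum2 : Summable fun k => ‖f (k + (K₂ + 1))‖ :=
    hgsum2.of_nonneg_of_le (fun _ => norm_nonneg _) (fun k => hbound _ (by omega))
  have hTb : ‖T‖ ≤ b := by
    refine (norm_tsum_le_tsum_norm hnsum2).trans ?_
    rw [hb]
    have := Summable.tsum_le_tsum (fun k => hbound (k + (K₂ + 1)) (by omega)) hnsum2 hgsum2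
    refine this.trans (le_of_eq (tsum_congr fun k => ?_))
    simp [hg, Nat.add_comm]
  -- bound on S₂
  have hgsum1 : Summable fun k => g (k + (K₁ + 1)) := (summable_nat_add_iff (K₁ + 1)).mpr hsum
  have hS₂b : ‖S₂‖ ≤ a₁ := by
    refine (norm_sum_le _ _).trans ?_
    have h1 : (∑ k ∈ Finset.Icc (K₁ + 1) K₂, ‖f k‖) ≤ ∑ k ∈ Finset.Icc (K₁ + 1) K₂, g k :=
      Finset.sum_le_sum fun k hk => hbound k (by simp [Finset.mem_Icc] at hk; omega)
    refine h1.trans ?_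
    rw [← Finset.Ico_add_one_right_eq_Icc, Finset.sum_Ico_eq_sum_range]
    have h2 : (∑ k ∈ Finset.range (K₂ + 1 - (K₁ + 1)), g (K₁ + 1 + k))
        ≤ ∑' k, g (K₁ + 1 + k) := by
      refine Summable.sum_le_tsum _ (fun k _ => by positivity) ?_
      exact hgsum1.congr fun k => by rw [Nat.add_comm]
    refine h2.trans (le_of_eq ?_)
    rw [ha₁]
  calc ‖(∑' k, f k) - V₂‖ = ‖T + ((1 : ℂ) - ((1 : ℂ) - (p:ℂ))⁻¹) • S₂‖ := by rw [hdiff]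
    _ ≤ ‖T‖ + ‖(1 : ℂ) - ((1 : ℂ) - (p:ℂ))⁻¹‖ * ‖S₂‖ := by
        refine (norm_add_le _ _).trans ?_
        gcongr
        exact norm_smul_le _ _
    _ ≤ b + (p / (1 - p)) * a₁ := by
        rw [hcnorm]
        gcongr
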